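/- If x₀ is T-periodic, then the monodromy matrix X̃(0)⁻¹ · X̃(T), where X̃(t) is the Diliberto matrix with first column f(x₀(t)) and second column a(t) f(x₀(t)) + (b(t)/‖f(x₀(t))‖²) f⊥(x₀(t)), is upper triangular with entries X̃(0)⁻¹X̃(T) = [[1, a(T)], [0, b(T)]]. In particular the characteristic (Floquet) multipliers of the variational equation along the periodic orbit are λ₁ = 1 and λ₂ = b(T) = exp(∫₀ᵀ (div f)(x₀(s)) ds). -/

import Mathlib

open Matrix

noncomputable section

/-- The perpendicular vector field on ℝ²: `(v₁, v₂) ↦ (v₂, −v₁)`. -/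
def perp (v : Fin 2 → ℝ) : Fin 2 → ℝ := ![v 1, -v 0]

/-- The Jacobian matrix of `f : ℝ² → ℝ²` at a point `x`: entry `(i, j)` is `∂fᵢ/∂xⱼ (x)`. -/
def jac (f : (Fin 2 → ℝ) → (Fin 2 → ℝ)) (x : Fin 2 → ℝ) : Matrix (Fin 2) (Fin 2) ℝ :=
  Matrix.of fun i j => fderiv ℝ f x (Pi.single j 1) i

/-- The divergence of `f : ℝ² → ℝ²`, i.e. the trace of its Jacobian. -/
def divg (f : (Fin 2 → ℝ) → (Fin 2 → ℝ)) (x : Fin 2 → ℝ) : ℝ := (jac f x).trace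

/-- Diliberto's function `b(t) = exp(∫₀ᵗ (div f)(x₀ s) ds)`. -/
def bD (f : (Fin 2 → ℝ) → (Fin 2 → ℝ)) (x₀ : ℝ → (Fin 2 → ℝ)) (t : ℝ) : ℝ :=
  Real.exp (∫ s in (0:ℝ)..t, divg f (x₀ s))

/-- Diliberto's function
`a(t) = ∫₀ᵗ [f(x₀ s)ᵀ (A s + (A s)ᵀ) f⊥(x₀ s) / ‖f(x₀ s)‖⁴] b(s) ds`
(here `‖v‖² = v ⬝ᵥ v` is the square of the euclidean norm). -/
def aD (f : (Fin 2 → ℝ) → (Fin 2 → ℝ)) (x₀ : ℝ → (Fin 2 → ℝ)) (t : ℝ) : ℝ :=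
  ∫ s in (0:ℝ)..t,
    (f (x₀ s) ⬝ᵥ ((jac f (x₀ s) + (jac f (x₀ s))ᵀ).mulVec (perp (f (x₀ s)))) /
      (f (x₀ s) ⬝ᵥ f (x₀ s)) ^ 2) * bD f x₀ s

/-- The Diliberto fundamental matrix: first column `f(x₀ t)`, second column
`a(t) f(x₀ t) + (b(t)/‖f(x₀ t)‖²) f⊥(x₀ t)`. -/
def XD (f : (Fin 2 → ℝ) → (Fin 2 → ℝ)) (x₀ : ℝ → (Fin 2 → ℝ)) (t : ℝ) :
    Matrix (Fin 2) (Fin 2) ℝ :=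
  Matrix.of fun i j =>
    ![f (x₀ t),
      aD f x₀ t • f (x₀ t) + (bD f x₀ t / (f (x₀ t) ⬝ᵥ f (x₀ t))) • perp (f (x₀ t))] j i

/-- For a `T`-periodic solution the monodromy matrix
`X̃(0)⁻¹ X̃(T)` equals `[[1, a(T)], [0, b(T)]]`; in particular the Floquet
multipliers (the eigenvalues of the monodromy matrix, i.e. the roots of its
characteristic polynomial) are `λ₁ = 1` and `λ₂ = b(T) = exp(∫₀ᵀ div f (x₀ s) ds)`. -/
theorem monodromy_matrix_upper_triangular
    (f : (Fin 2 → ℝ) → (Fin 2 → ℝ)) (x₀ : ℝ → (Fin 2 → ℝ)) (T : ℝ)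
    (hf : ContDiff ℝ 1 f)
    (hx : ∀ t, HasDerivAt x₀ (f (x₀ t)) t)
    (hfne : ∀ t, f (x₀ t) ≠ 0)
    (hT : 0 < T)
    (hper : ∀ t, x₀ (t + T) = x₀ t) :
    (XD f x₀ 0)⁻¹ * XD f x₀ T = !![1, aD f x₀ T; 0, bD f x₀ T] ∧
    ((XD f x₀ 0)⁻¹ * XD f x₀ T).charpoly =
      (Polynomial.X - Polynomial.C 1) *
        (Polynomial.X - Polynomial.C (Real.exp (∫ s in (0:ℝ)..T, divg f (x₀ s)))) := by
  have hx0 : x₀ T = x₀ 0 := by simpa using hper 0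
  have ha0 : aD f x₀ 0 = 0 := intervalIntegral.integral_same
  have hb0 : bD f x₀ 0 = 1 := by simp [bD]
  set v := f (x₀ 0) with hv
  have hn : v ⬝ᵥ v ≠ 0 := fun h => hfne 0 (dotProduct_self_eq_zero.mp h)
  -- XD at time T factors
  have hfac : XD f x₀ T = XD f x₀ 0 * !![1, aD f x₀ T; 0, bD f x₀ T] := by
    ext i j
    fin_cases i <;> fin_cases j <;>
      simp [XD, hx0, ha0, hb0, Matrix.mul_apply, Fin.sum_univ_two, Pi.add_apply,
        Pi.smul_apply, smul_eq_mul] <;> ring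
  have hdet : (XD f x₀ 0).det ≠ 0 := by
    have hn' : v 0 * v 0 + v 1 * v 1 ≠ 0 := by
      rwa [dotProduct, Fin.sum_univ_two] at hn
    have : (XD f x₀ 0).det = -1 := by
      simp only [Matrix.det_fin_two, XD, Matrix.of_apply, ha0, hb0]
      simp only [← hv, perp, smul_eq_mul, Pi.add_apply, Pi.smul_apply, smul_eq_mul,
        dotProduct, Fin.sum_univ_two, Matrix.cons_val_zero, Matrix.cons_val_one,
        Matrix.head_cons, zero_mul, zero_add, one_div]
      have h2 : v 0 ^ 2 + v 1 ^ 2 ≠ 0 := by rwa [sq, sq]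
      field_simp
      ring
    rw [this]; norm_num
  have hXD : (XD f x₀ 0)⁻¹ * XD f x₀ T = !![1, aD f x₀ T; 0, bD f x₀ T] := by
    rw [hfac, ← mul_assoc, Matrix.nonsing_inv_mul _ (isUnit_iff_ne_zero.mpr hdet), one_mul]
  refine ⟨hXD, ?_⟩
  rw [hXD, Matrix.charpoly, Matrix.det_fin_two]
  have h01 : (0:Fin 2) ≠ 1 := by decide
  rw [Matrix.charmatrix_apply_eq, Matrix.charmatrix_apply_eq,
    Matrix.charmatrix_apply_ne _ _ _ h01, Matrix.charmatrix_apply_ne _ _ _ h01.symm]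
  have : bD f x₀ T = Real.exp (∫ s in (0:ℝ)..T, divg f (x₀ s)) := rfl
  rw [this]
  simp

end
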